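/- Walks on {0,...,m} from m-1 to m avoiding 0, with k+1 right steps and k left steps, are in bijection with Dyck paths of semilength k with height at most m-2 (for m ≥ 2): the number B(m,k) of such walks satisfies B(m,k) = A(m-2,k). -/

import Mathlib

/-- Position of the walk on {0,…,m} started at m-1 after following the first `i`
steps of `w` (`true` = step right, `false` = step left). -/
def walkPos (m : ℕ) (w : List Bool) (i : ℕ) : ℤ :=
  (m : ℤ) - 1 + ((w.take i).count true : ℤ) - ((w.take i).count false : ℤ)

/-- The step sequence `w` drives the walk started at m-1 to m, staying strictly
between 0 and m before its final step (i.e. the walk reaches m before reaching 0,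
and `w` stops at that moment). -/
def HitsTopFirst (m : ℕ) (w : List Bool) : Prop :=
  walkPos m w w.length = m ∧ ∀ i < w.length, 0 < walkPos m w i ∧ walkPos m w i < m
/-- Prefix height of a path encoded as a list of booleans (`true` = up step (1,1),
`false` = down step (1,-1)) after `i` steps. -/
def pathHeight (w : List Bool) (i : ℕ) : ℤ :=
  ((w.take i).count true : ℤ) - ((w.take i).count false : ℤ)

/-- `w` encodes a Dyck path: it never goes below the x-axis and ends on the x-axis. -/
def IsDyckPath (w : List Bool) : Prop :=
  (∀ i, 0 ≤ pathHeight w i) ∧ pathHeight w w.length = 0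

/-- The number of Dyck paths of semilength `k` whose height is at most `n`. -/
noncomputable def A (n k : ℕ) : ℕ :=
  Nat.card {w : List Bool // w.length = 2 * k ∧ IsDyckPath w ∧ ∀ i, pathHeight w i ≤ n}

/-- The number B(m,k) of walks from m-1 to m avoiding 0, with k+1 right steps and
k left steps. -/
noncomputable def B (m k : ℕ) : ℕ :=
  Nat.card {w : List Bool // HitsTopFirst m w ∧ w.count true = k + 1 ∧ w.count false = k}

/-! ### auxiliary lemmas -/

def S (l : List Bool) : ℤ := (l.count true : ℤ) - (l.count false : ℤ)

lemma count_not_true (l : List Bool) : (l.map not).count true = l.count false := by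
  induction l with
  | nil => simp
  | cons a l ih => cases a <;> simp [ih]

lemma count_not_false (l : List Bool) : (l.map not).count false = l.count true := by
  induction l with
  | nil => simp
  | cons a l ih => cases a <;> simp [ih]

lemma len_count (l : List Bool) : l.length = l.count true + l.count false := by
  induction l with
  | nil => simp
  | cons a l ih =>
    simp only [List.length_cons, List.count_cons, ih]
    cases a <;> simp <;> omega

lemma S_append (l₁ l₂ : List Bool) : S (l₁ ++ l₂) = S l₁ + S l₂ := by
  simp [S, List.count_append]; ring

lemma S_map_not (l : List Bool) : S (l.map not) = - S l := by
  simp [S, count_not_true, count_not_false]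

lemma walkPos_eq (m : ℕ) (w : List Bool) (i : ℕ) :
    walkPos m w i = (m : ℤ) - 1 + S (w.take i) := by
  simp [walkPos, S]; ring

lemma pathHeight_eq (w : List Bool) (i : ℕ) : pathHeight w i = S (w.take i) := rfl

lemma S_true : S [true] = 1 := by simp [S]
lemma S_false : S [false] = -1 := by simp [S]

/-- any walk in the B-set ends with a `true` step. -/
lemma ends_true {m k : ℕ} {w : List Bool} (hw : HitsTopFirst m w)
    (ht : w.count true = k + 1) (hf : w.count false = k) :
    w = w.dropLast ++ [true] := by
  have hlen : w.length = 2 * k + 1 := by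
    have := len_count w; omega
  have hne : w ≠ [] := by
    intro h; rw [h] at hlen; simp at hlen
  have hS : S w = 1 := by simp [S, ht, hf]
  have hsplit := List.dropLast_append_getLast hne
  cases hb : w.getLast hne with
  | true => rw [hb] at hsplit; exact hsplit.symm
  | false =>
    exfalso
    rw [hb] at hsplit
    have hSd : S w.dropLast = 2 := by
      have := S_append w.dropLast [false]
      rw [hsplit] at this
      rw [S_false] at this; omega
    have htake : w.take (w.length - 1) = w.dropLast := List.dropLast_eq_take.symm
    have h2 := (hw.2 (w.length - 1) (by omega)).2
    rw [walkPos_eq, htake, hSd] at h2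
    omega

lemma S_take_cast {l : List Bool} : S (l.take l.length) = S l := by
  rw [List.take_length]

/-- Such walks are in bijection with Dyck paths of semilength k and height at most
m-2: B(m,k) = A(m-2,k). -/
theorem walk_dyck_correspondence (m k : ℕ) (hm : 2 ≤ m) : B m k = A (m - 2) k := by
  have hcast : ((m - 2 : ℕ) : ℤ) = (m : ℤ) - 2 := by
    push_cast [Nat.cast_sub hm]; ring
  apply Nat.card_congr
  refine
    { toFun := fun w => ⟨(w.1.dropLast).map not, ?_⟩
      invFun := fun v => ⟨(v.1.map not) ++ [true], ?_⟩
      left_inv := ?_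
      right_inv := ?_ }
  · -- forward properties
    obtain ⟨w, hw, ht, hf⟩ := w
    have hlen : w.length = 2 * k + 1 := by have := len_count w; omega
    have hconc := ends_true hw ht hf
    have hSw : S w = 1 := by simp [S, ht, hf]
    have hSd : S w.dropLast = 0 := by
      have := S_append w.dropLast [true]
      rw [← hconc, S_true] at this; omega
    have hlend : w.dropLast.length = 2 * k := by
      simp [List.length_dropLast, hlen]
    -- key: prefix heights
    have hph : ∀ i, pathHeight ((w.dropLast).map not) i = - S (w.take (min i (2 * k))) := by
      intro i
      rw [pathHeight_eq, ← List.map_take, S_map_not, List.dropLast_eq_take, List.take_take, hlen]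
      norm_num
    have hbound : ∀ j, j ≤ 2 * k → 0 < (m : ℤ) - 1 + S (w.take j) ∧
        (m : ℤ) - 1 + S (w.take j) < m := by
      intro j hj
      have := hw.2 j (by omega)
      rwa [walkPos_eq] at this
    refine ⟨by rw [List.length_map]; exact hlend, ⟨?_, ?_⟩, ?_⟩
    · intro i
      have := (hbound (min i (2 * k)) (by omega)).2
      rw [hph i]; omega
    · rw [List.length_map, hlend, hph]
      have : w.take (min (2*k) (2*k)) = w.dropLast := by
        rw [min_self, List.dropLast_eq_take]; congr 1; omega
      rw [this, hSd]; ring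
    · intro i
      have := (hbound (min i (2 * k)) (by omega)).1
      rw [hph i, hcast]; omega
  · -- backward properties
    obtain ⟨v, hlv, ⟨hd1, hd2⟩, hb⟩ := v
    have hSv : S v = 0 := by
      have := hd2; rw [pathHeight_eq, S_take_cast] at this; exact this
    have hcnt : v.count true = k ∧ v.count false = k := by
      have h1 := len_count v
      have : (v.count true : ℤ) = v.count false := by have := hSv; simp [S] at this; omega
      omega
    have hwlen : ((v.map not) ++ [true]).length = 2 * k + 1 := by
      simp [hlv]
    refine ⟨⟨?_, ?_⟩, ?_, ?_⟩
    · rw [walkPos_eq, hwlen, show (2*k+1) = ((v.map not) ++ [true]).length from hwlen.symm,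
        S_take_cast, S_append, S_map_not, S_true, hSv]
      ring
    · intro i hi
      rw [hwlen] at hi
      have hi' : i ≤ 2 * k := by omega
      have htk : ((v.map not) ++ [true]).take i = (v.take i).map not := by
        rw [List.take_append_of_le_length (by simp [hlv]; omega), List.map_take]
      rw [walkPos_eq, htk, S_map_not, ← pathHeight_eq]
      have h1 := hd1 i
      have h2 := hb i
      rw [hcast] at h2
      constructor <;> omega
    · rw [List.count_append, count_not_true, hcnt.2]; simp
    · rw [List.count_append, count_not_false, hcnt.1]; simp
  · -- left inverse
    rintro ⟨w, hw, ht, hf⟩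
    have hconc := ends_true hw ht hf
    apply Subtype.ext
    dsimp only
    rw [List.map_map]
    have : (not ∘ not) = id := by funext b; simp
    rw [this, List.map_id]
    exact hconc.symm
  · -- right inverse
    rintro ⟨v, hv⟩
    apply Subtype.ext
    dsimp only
    rw [List.dropLast_concat, List.map_map]
    have : (not ∘ not) = id := by funext b; simp
    rw [this, List.map_id]
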